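/- Let ε > 1, α > 0, r ≥ 2 an integer, and define H(s) = ε|s + α|^r - |s|^r for s = a + jb with a ≥ 0. Then H(s) is positive, nondecreasing in b² and strictly increasing in a, and satisfies H(s) > ε α^r for all s with Re(s) ≥ 0. -/

import Mathlib

open Real Set

lemma aux_sqrt_pow (r : ℕ) {x : ℝ} (hx : 0 ≤ x) :
    Real.sqrt x ^ r = x ^ ((r : ℝ) / 2) := by
  rw [show Real.sqrt x ^ r = Real.sqrt x ^ ((r : ℝ)) from (Real.rpow_natCast _ r).symm,
    Real.sqrt_eq_rpow, ← Real.rpow_mul hx]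
  ring_nf

lemma aux_superadd {r : ℕ} (hr : 2 ≤ r) {A B C : ℝ} (hA : 0 ≤ A) (hB : 0 ≤ B)
    (hC : 0 ≤ C) (h : A ^ 2 + B ^ 2 ≤ C ^ 2) : A ^ r + B ^ r ≤ C ^ r := by
  obtain ⟨k, rfl⟩ : ∃ k, r = k + 2 := ⟨r - 2, by omega⟩
  have hAC : A ≤ C := by nlinarith
  have hBC : B ≤ C := by nlinarith
  have h1 : A ^ k ≤ C ^ k := pow_le_pow_left₀ hA hAC k
  have h2 : B ^ k ≤ C ^ k := pow_le_pow_left₀ hB hBC k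
  have hCk : 0 ≤ C ^ k := pow_nonneg hC k
  calc A ^ (k + 2) + B ^ (k + 2) = A ^ k * A ^ 2 + B ^ k * B ^ 2 := by ring
    _ ≤ C ^ k * A ^ 2 + C ^ k * B ^ 2 := by nlinarith [sq_nonneg A, sq_nonneg B]
    _ = C ^ k * (A ^ 2 + B ^ 2) := by ring
    _ ≤ C ^ k * C ^ 2 := by nlinarith
    _ = C ^ (k + 2) := by ring

lemma aux_inc (p : ℝ) (hp : 1 ≤ p) {u v δ : ℝ} (hu : 0 ≤ u) (huv : u ≤ v) (hδ : 0 ≤ δ) :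
    (u + δ) ^ p - u ^ p ≤ (v + δ) ^ p - v ^ p := by
  have hconv : ConvexOn ℝ (Set.Ici 0) fun x : ℝ => x ^ p := convexOn_rpow hp
  rcases eq_or_lt_of_le (show u ≤ v + δ by linarith) with heq | hlt
  · have hv : v = u := le_antisymm (by linarith) huv
    have hδ0 : δ = 0 := by linarith
    simp [hv, hδ0]
  set T := v + δ - u with hT
  have hT0 : 0 < T := by simp only [hT]; linarith
  set t := δ / T with ht
  have ht0 : 0 ≤ t := div_nonneg hδ hT0.le
  have ht1 : t ≤ 1 := by rw [ht, div_le_one hT0]; simp only [hT]; linarith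
  have htT : t * T = δ := div_mul_cancel₀ δ hT0.ne'
  have h1 := hconv.2 (Set.mem_Ici.2 hu) (Set.mem_Ici.2 (show (0:ℝ) ≤ v + δ by linarith))
    (show (0:ℝ) ≤ 1 - t by linarith) ht0 (by ring)
  have h2 := hconv.2 (Set.mem_Ici.2 hu) (Set.mem_Ici.2 (show (0:ℝ) ≤ v + δ by linarith))
    ht0 (show (0:ℝ) ≤ 1 - t by linarith) (by ring)
  simp only [smul_eq_mul] at h1 h2
  have e1 : (1 - t) * u + t * (v + δ) = u + δ := by
    simp only [hT] at htT; linear_combination htT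
  have e2 : t * u + (1 - t) * (v + δ) = v := by
    simp only [hT] at htT; linear_combination -htT
  rw [e1] at h1
  rw [e2] at h2
  nlinarith [h1, h2]

/-- For `ε > 1`, `α > 0`, integer `r ≥ 2`, the function
`H(s) = ε|s + α|^r - |s|^r` on the closed right half-plane is positive,
nondecreasing in `b²` (where `s = a + jb`), strictly increasing in `a`, and
bounded below by `ε α^r` (strictly so for `s ≠ 0`). -/
theorem stmt_18 (ε α : ℝ) (r : ℕ) (hε : 1 < ε) (hα : 0 < α) (hr : 2 ≤ r)
    (H : ℂ → ℝ)
    (hH : ∀ s : ℂ, H s = ε * ‖s + (α : ℂ)‖ ^ r - ‖s‖ ^ r) :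
    (∀ s : ℂ, 0 ≤ s.re → 0 < H s) ∧
    (∀ a b₁ b₂ : ℝ, 0 ≤ a → b₁ ^ 2 ≤ b₂ ^ 2 →
      H (Complex.mk a b₁) ≤ H (Complex.mk a b₂)) ∧
    (∀ a₁ a₂ b : ℝ, 0 ≤ a₁ → a₁ < a₂ →
      H (Complex.mk a₁ b) < H (Complex.mk a₂ b)) ∧
    (∀ s : ℂ, 0 ≤ s.re → ε * α ^ r ≤ H s) ∧
    (∀ s : ℂ, 0 ≤ s.re → s ≠ 0 → ε * α ^ r < H s) := by
  set p : ℝ := (r : ℝ) / 2 with hpdef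
  have hp : 1 ≤ p := by
    rw [hpdef]
    have : (2 : ℝ) ≤ (r : ℝ) := by exact_mod_cast hr
    linarith
  have hp0 : 0 < p := by linarith
  -- representation in coordinates
  have hrep : ∀ a b : ℝ, H ⟨a, b⟩ =
      ε * ((a + α) ^ 2 + b ^ 2) ^ p - (a ^ 2 + b ^ 2) ^ p := by
    intro a b
    rw [hH]
    have h1 : ‖(⟨a, b⟩ : ℂ) + (α : ℂ)‖ = Real.sqrt ((a + α) ^ 2 + b ^ 2) := by
      rw [Complex.norm_def, Complex.normSq_apply]
      simp [Complex.add_re, Complex.add_im, Complex.ofReal_re, Complex.ofReal_im]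
      ring_nf
    have h2 : ‖(⟨a, b⟩ : ℂ)‖ = Real.sqrt (a ^ 2 + b ^ 2) := by
      rw [Complex.norm_def, Complex.normSq_apply]
      ring_nf
    rw [h1, h2, aux_sqrt_pow r (by positivity), aux_sqrt_pow r (by positivity)]
  -- key lower bound
  have key : ∀ s : ℂ, 0 ≤ s.re →
      ε * α ^ r + (ε - 1) * ‖s‖ ^ r ≤ H s := by
    intro s hs
    rw [hH]
    have h2 : (‖s + (α : ℂ)‖) ^ 2 = (s.re + α) ^ 2 + s.im ^ 2 := by
      rw [Complex.sq_norm, Complex.normSq_apply]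
      simp [Complex.add_re, Complex.add_im]
      ring
    have h3 : (‖s‖) ^ 2 = s.re ^ 2 + s.im ^ 2 := by
      rw [Complex.sq_norm, Complex.normSq_apply]; ring
    have hsq : α ^ 2 + (‖s‖) ^ 2 ≤ (‖s + (α : ℂ)‖) ^ 2 := by
      rw [h2, h3]; nlinarith
    have hsup := aux_superadd hr hα.le (norm_nonneg s)
      (norm_nonneg (s + (α : ℂ))) hsq
    nlinarith [hsup, pow_nonneg (norm_nonneg s) r]
  have hεα : 0 < ε * α ^ r := mul_pos (by linarith) (pow_pos hα r)
  refine ⟨?_, ?_, ?_, ?_, ?_⟩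
  · intro s hs
    have := key s hs
    have h0 : 0 ≤ (ε - 1) * ‖s‖ ^ r :=
      mul_nonneg (by linarith) (pow_nonneg (norm_nonneg s) r)
    linarith
  · intro a b₁ b₂ ha hb
    rw [hrep, hrep]
    have hu : 0 ≤ a ^ 2 + b₁ ^ 2 := by positivity
    have huv : a ^ 2 + b₁ ^ 2 ≤ (a + α) ^ 2 + b₁ ^ 2 := by nlinarith
    have hδ : 0 ≤ b₂ ^ 2 - b₁ ^ 2 := by linarith
    have hinc := aux_inc p hp hu huv hδ
    rw [show a ^ 2 + b₁ ^ 2 + (b₂ ^ 2 - b₁ ^ 2) = a ^ 2 + b₂ ^ 2 by ring,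
      show (a + α) ^ 2 + b₁ ^ 2 + (b₂ ^ 2 - b₁ ^ 2) = (a + α) ^ 2 + b₂ ^ 2 by ring] at hinc
    have hV : ((a + α) ^ 2 + b₁ ^ 2) ^ p ≤ ((a + α) ^ 2 + b₂ ^ 2) ^ p :=
      Real.rpow_le_rpow (by positivity) (by linarith) hp0.le
    nlinarith [hinc, hV]
  · intro a₁ a₂ b ha h12
    rw [hrep, hrep]
    have hu : 0 ≤ a₁ ^ 2 + b ^ 2 := by positivity
    have huv : a₁ ^ 2 + b ^ 2 ≤ (a₁ + α) ^ 2 + b ^ 2 := by nlinarith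
    have hδ : 0 ≤ a₂ ^ 2 + b ^ 2 - (a₁ ^ 2 + b ^ 2) := by nlinarith
    have hinc := aux_inc p hp hu huv hδ
    rw [show a₁ ^ 2 + b ^ 2 + (a₂ ^ 2 + b ^ 2 - (a₁ ^ 2 + b ^ 2)) = a₂ ^ 2 + b ^ 2 by ring] at hinc
    have hmono : ((a₁ + α) ^ 2 + b ^ 2 + (a₂ ^ 2 + b ^ 2 - (a₁ ^ 2 + b ^ 2))) ^ p
        ≤ ((a₂ + α) ^ 2 + b ^ 2) ^ p :=
      Real.rpow_le_rpow (by nlinarith) (by nlinarith) hp0.le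
    have hstrict : ((a₁ + α) ^ 2 + b ^ 2) ^ p < ((a₂ + α) ^ 2 + b ^ 2) ^ p :=
      Real.rpow_lt_rpow (by positivity) (by nlinarith) hp0
    nlinarith [hinc, hmono, hstrict]
  · intro s hs
    have := key s hs
    have h0 : 0 ≤ (ε - 1) * ‖s‖ ^ r :=
      mul_nonneg (by linarith) (pow_nonneg (norm_nonneg s) r)
    linarith
  · intro s hs hs0
    have := key s hs
    have habs : 0 < ‖s‖ := norm_pos_iff.mpr hs0
    have h0 : 0 < (ε - 1) * ‖s‖ ^ r :=
      mul_pos (by linarith) (pow_pos habs r)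
    linarith
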